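/- For each K in T_n, the graph Γ(K) is a tree. -/

import Mathlib

/-- `IsTn n S` : the finset `S` of `n`-simplices (each a finset of `n+1` vertices)
forms a complex in the class `𝒯ₙ`: the smallest class of `n`-dimensional complexes
containing the `n`-simplex and closed under gluing two members along an
`(n-1)`-simplex.  Equivalently, the complex is built by starting from one
`n`-simplex and repeatedly gluing a fresh `n`-simplex along an `(n-1)`-face of
the complex built so far (the opposite vertex being new). -/
inductive IsTn {V : Type} [DecidableEq V] (n : ℕ) : Finset (Finset V) → Prop
  | single (s : Finset V) (h : s.card = n + 1) : IsTn n {s}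
  | glue (S : Finset (Finset V)) (s f : Finset V) (v : V) :
      IsTn n S → s ∈ S → f ⊆ s → f.card = n → (∀ t ∈ S, v ∉ t) →
      IsTn n (insert (insert v f) S)

/-- The 1-skeleton of the complex with set of maximal simplices `S`. -/
def skeleton {V : Type} [DecidableEq V] (S : Finset (Finset V)) : SimpleGraph V where
  Adj v w := v ≠ w ∧ ∃ s ∈ S, v ∈ s ∧ w ∈ s
  symm := by
    constructor; rintro v w ⟨h, s, hs, hv, hw⟩
    exact ⟨Ne.symm h, s, hs, hw, hv⟩
  loopless := by constructor; rintro v ⟨h, -⟩; exact h rfl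

/-- `f` is (the spine of) a piece of the complex `S`: an `(n-1)`-simplex which is a
face of at least two `n`-simplices. -/
def IsPiece {V : Type} [DecidableEq V] (S : Finset (Finset V)) (n : ℕ) (f : Finset V) : Prop :=
  f.card = n ∧ 2 ≤ (S.filter (fun s => f ⊆ s)).card

instance {V : Type} [DecidableEq V] (S : Finset (Finset V)) (n : ℕ) :
    DecidablePred (IsPiece S n) := fun f =>
  decidable_of_iff (f.card = n ∧ 2 ≤ (S.filter (fun s => f ⊆ s)).card) Iff.rfl

/-- p-vertices of `Γ(K)`: the pieces of the complex. -/
def PVert {V : Type} [DecidableEq V] (S : Finset (Finset V)) (n : ℕ) : Type :=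
  {f : Finset V // IsPiece S n f}

/-- f-vertices of `Γ(K)`: the `n`-simplices lying in more than one piece. -/
def FVert {V : Type} [DecidableEq V] (S : Finset (Finset V)) (n : ℕ) : Type :=
  {s : Finset V // s ∈ S ∧ 2 ≤ ((s.powersetCard n).filter (fun f => IsPiece S n f)).card}

/-- The graph `Γ(K)`: a p-vertex (piece) is adjacent to an f-vertex (simplex) iff the
simplex contains the spine of the piece. -/
def Gamma {V : Type} [DecidableEq V] (S : Finset (Finset V)) (n : ℕ) :
    SimpleGraph (PVert S n ⊕ FVert S n) where
  Adj a b :=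
    match a, b with
    | .inl p, .inr t => p.1 ⊆ t.1
    | .inr t, .inl p => p.1 ⊆ t.1
    | _, _ => False
  symm := by constructor; rintro (p | t) (p' | t') h <;> simp_all
  loopless := by constructor; rintro (p | t) h <;> simp_all

/-! ### Auxiliary graph machinery -/

/-- Add a single edge between distinct vertices `x` and `y` to a graph. -/
def addE {W : Type} (G : SimpleGraph W) (x y : W) (hxy : x ≠ y) : SimpleGraph W where
  Adj a b := G.Adj a b ∨ (a = x ∧ b = y) ∨ (a = y ∧ b = x)
  symm := by
    constructor
    rintro a b (h | ⟨rfl, rfl⟩ | ⟨rfl, rfl⟩)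
    · exact Or.inl h.symm
    · exact Or.inr (Or.inr ⟨rfl, rfl⟩)
    · exact Or.inr (Or.inl ⟨rfl, rfl⟩)
  loopless := by
    constructor
    rintro a (h | ⟨rfl, rfl⟩ | ⟨rfl, rfl⟩)
    · exact G.loopless.irrefl a h
    · exact hxy rfl
    · exact hxy rfl

lemma addE_adj {W : Type} {G : SimpleGraph W} {x y : W} {hxy : x ≠ y} {a b : W} :
    (addE G x y hxy).Adj a b ↔ G.Adj a b ∨ (a = x ∧ b = y) ∨ (a = y ∧ b = x) := Iff.rfl

lemma addE_le {W : Type} {G : SimpleGraph W} {x y : W} (hxy : x ≠ y) :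
    G ≤ addE G x y hxy := fun _ _ h => Or.inl h

lemma addE_adj_xy {W : Type} {G : SimpleGraph W} {x y : W} (hxy : x ≠ y) :
    (addE G x y hxy).Adj x y := Or.inr (Or.inl ⟨rfl, rfl⟩)

lemma addE_nbr {W : Type} {G : SimpleGraph W} {x y : W} {hxy : x ≠ y}
    (hx : ∀ z, ¬ G.Adj x z) {z : W} (h : (addE G x y hxy).Adj x z) : z = y := by
  rcases h with h | ⟨-, rfl⟩ | ⟨h, rfl⟩
  · exact absurd h (hx z)
  · rfl
  · exact (hxy h).elim

lemma addE_isAcyclic {W : Type} [DecidableEq W] {G : SimpleGraph W} {x y : W} (hxy : x ≠ y)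
    (hx : ∀ z, ¬ G.Adj x z) (hG : G.IsAcyclic) : (addE G x y hxy).IsAcyclic := by
  intro u c hc
  by_cases hxs : x ∈ c.support
  · -- rotate the cycle to start at x
    have hc' := hc.rotate hxs
    obtain ⟨b, h1, p, hp⟩ := (SimpleGraph.Walk.not_nil_iff).mp hc'.not_nil
    rw [hp] at hc'
    have hb : b = y := addE_nbr hx h1
    -- p : Walk b x; its last edge is incident to x, so equals s(x,b)
    have hpr : ¬ p.reverse.Nil := SimpleGraph.Walk.not_nil_of_ne (fun h => hxy (h.trans hb))
    obtain ⟨d, h2, q, hq⟩ := (SimpleGraph.Walk.not_nil_iff).mp hpr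
    have hd : d = b := (addE_nbr hx h2).trans hb.symm
    have hmem : s(x, b) ∈ p.edges := by
      have h3 : s(x, d) ∈ p.reverse.edges := by rw [hq]; simp
      rw [SimpleGraph.Walk.edges_reverse, List.mem_reverse] at h3
      rwa [hd] at h3
    exact ((SimpleGraph.Walk.cons_isCycle_iff p h1).mp hc').2 hmem
  · -- the cycle avoids x, so it lives in G
    have he : ∀ e ∈ c.edges, e ∈ G.edgeSet := by
      intro e he
      induction e with
      | h a b =>
        have hadj : (addE G x y hxy).Adj a b := c.adj_of_mem_edges he
        have ha : a ∈ c.support := c.fst_mem_support_of_mem_edges he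
        have hb : b ∈ c.support := c.snd_mem_support_of_mem_edges he
        rcases hadj with h | ⟨rfl, rfl⟩ | ⟨rfl, rfl⟩
        · exact h
        · exact absurd ha hxs
        · exact absurd hb hxs
    exact hG (c.transfer G he) (hc.transfer he)

lemma isAcyclic_of_no_adj {W : Type} {G : SimpleGraph W} (h : ∀ a b, ¬ G.Adj a b) :
    G.IsAcyclic := by
  intro u c hc
  cases c with
  | nil => exact SimpleGraph.Walk.IsCycle.not_of_nil hc
  | cons ha q => exact h _ _ ha

/-! ### The ambient version of `Γ(K)` on the fixed vertex type `Finset V ⊕ Finset V` -/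

/-- `t` is an f-vertex condition: `t` is a simplex of `S` containing at least two pieces. -/
def FCond {V : Type} [DecidableEq V] (n : ℕ) (S : Finset (Finset V)) (t : Finset V) : Prop :=
  t ∈ S ∧ 2 ≤ ((t.powersetCard n).filter (fun f => IsPiece S n f)).card

/-- The vertices of the ambient graph that correspond to genuine vertices of `Γ(K)`. -/
def Legit {V : Type} [DecidableEq V] (n : ℕ) (S : Finset (Finset V)) :
    Finset V ⊕ Finset V → Prop
  | .inl p => IsPiece S n p
  | .inr t => FCond n S t

/-- The ambient version of `Γ(K)`. -/
def GammaHat {V : Type} [DecidableEq V] (n : ℕ) (S : Finset (Finset V)) :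
    SimpleGraph (Finset V ⊕ Finset V) where
  Adj a b := match a, b with
    | .inl p, .inr t => IsPiece S n p ∧ FCond n S t ∧ p ⊆ t
    | .inr t, .inl p => IsPiece S n p ∧ FCond n S t ∧ p ⊆ t
    | _, _ => False
  symm := by constructor; rintro (p | t) (p' | t') h <;> exact h
  loopless := by constructor; rintro (p | t) h <;> exact h

section Basic
variable {V : Type} [DecidableEq V] {n : ℕ} {S : Finset (Finset V)}

lemma gammaHat_adj_inl_inr {p t : Finset V} :
    (GammaHat n S).Adj (Sum.inl p) (Sum.inr t) ↔ IsPiece S n p ∧ FCond n S t ∧ p ⊆ t := Iff.rfl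

lemma gammaHat_adj_inr_inl {p t : Finset V} :
    (GammaHat n S).Adj (Sum.inr t) (Sum.inl p) ↔ IsPiece S n p ∧ FCond n S t ∧ p ⊆ t := Iff.rfl

lemma gammaHat_adj_inl_inl {p q : Finset V} :
    (GammaHat n S).Adj (Sum.inl p) (Sum.inl q) ↔ False := Iff.rfl

lemma gammaHat_adj_inr_inr {p q : Finset V} :
    (GammaHat n S).Adj (Sum.inr p) (Sum.inr q) ↔ False := Iff.rfl

lemma gammaHat_adj_legit {a b : Finset V ⊕ Finset V} (h : (GammaHat n S).Adj a b) :
    Legit n S a ∧ Legit n S b := by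
  rcases a with p | t <;> rcases b with p' | t'
  · exact h.elim
  · exact ⟨h.1, h.2.1⟩
  · exact ⟨h.2.1, h.1⟩
  · exact h.elim

lemma piece_exists_mem {p : Finset V} (hp : IsPiece S n p) : ∃ s ∈ S, p ⊆ s := by
  obtain ⟨s, hs⟩ := Finset.card_pos.mp (lt_of_lt_of_le (by norm_num) hp.2)
  exact ⟨s, (Finset.mem_filter.mp hs).1, (Finset.mem_filter.mp hs).2⟩

end Basic

section Glue
variable {V : Type} [DecidableEq V] {n : ℕ} {S : Finset (Finset V)} {s₀ f₀ : Finset V} {v : V}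

lemma glue_not_memT (hv : ∀ t ∈ S, v ∉ t) : insert v f₀ ∉ S :=
  fun h => hv _ h (Finset.mem_insert_self v f₀)

lemma piece_not_v (hv : ∀ t ∈ S, v ∉ t) {p : Finset V} (hp : IsPiece S n p) : v ∉ p := by
  obtain ⟨s, hs, hps⟩ := piece_exists_mem hp
  exact fun hvp => hv s hs (hps hvp)

lemma subT_iff (hcard : f₀.card = n) {p : Finset V} (hvp : v ∉ p) (hpc : p.card = n) :
    p ⊆ insert v f₀ ↔ p = f₀ := by
  constructor
  · intro h
    have h2 : p ⊆ f₀ := (Finset.subset_insert_iff_of_notMem hvp).mp h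
    exact Finset.eq_of_subset_of_card_le h2 (by rw [hcard, hpc])
  · rintro rfl; exact Finset.subset_insert _ _

lemma piece'_iff (hs₀ : s₀ ∈ S) (hsub : f₀ ⊆ s₀) (hcard : f₀.card = n)
    (hv : ∀ t ∈ S, v ∉ t) {p : Finset V} :
    IsPiece (insert (insert v f₀) S) n p ↔ p = f₀ ∨ IsPiece S n p := by
  have hTS : insert v f₀ ∉ S := glue_not_memT hv
  constructor
  · rintro ⟨hpc, hp2⟩
    by_cases hvp : v ∈ p
    · exfalso
      have hss : (insert (insert v f₀) S).filter (fun s => p ⊆ s) ⊆ {insert v f₀} := by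
        intro s hs
        rw [Finset.mem_filter, Finset.mem_insert] at hs
        rcases hs.1 with rfl | hsS
        · exact Finset.mem_singleton_self _
        · exact absurd (hs.2 hvp) (hv s hsS)
      have hle := Finset.card_le_card hss
      rw [Finset.card_singleton] at hle
      omega
    · by_cases hpf : p = f₀
      · exact Or.inl hpf
      · right
        have heq : (insert (insert v f₀) S).filter (fun s => p ⊆ s)
            = S.filter (fun s => p ⊆ s) := by
          rw [Finset.filter_insert, if_neg (fun h => hpf ((subT_iff hcard hvp hpc).mp h))]
        exact ⟨hpc, heq ▸ hp2⟩
  · intro h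
    rcases h with heq | hp
    · rw [heq]
      refine ⟨hcard, ?_⟩
      rw [Finset.filter_insert, if_pos (Finset.subset_insert _ _),
        Finset.card_insert_of_notMem (fun h => hTS (Finset.mem_filter.mp h).1)]
      have hpos : 0 < (S.filter (fun s => f₀ ⊆ s)).card :=
        Finset.card_pos.mpr ⟨s₀, Finset.mem_filter.mpr ⟨hs₀, hsub⟩⟩
      omega
    · exact ⟨hp.1, le_trans hp.2
        (Finset.card_le_card (Finset.filter_subset_filter _ (Finset.subset_insert _ _)))⟩

lemma pc_T (hs₀ : s₀ ∈ S) (hsub : f₀ ⊆ s₀) (hcard : f₀.card = n)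
    (hv : ∀ t ∈ S, v ∉ t) :
    ((insert v f₀).powersetCard n).filter
      (fun f => IsPiece (insert (insert v f₀) S) n f) = {f₀} := by
  ext p
  simp only [Finset.mem_filter, Finset.mem_powersetCard, Finset.mem_singleton]
  constructor
  · rintro ⟨⟨hpT, hpc⟩, hp⟩
    rcases (piece'_iff hs₀ hsub hcard hv).mp hp with rfl | hp
    · rfl
    · exact (subT_iff hcard (piece_not_v hv hp) hpc).mp hpT
  · rintro rfl
    exact ⟨⟨Finset.subset_insert _ _, hcard⟩, (piece'_iff hs₀ hsub hcard hv).mpr (Or.inl rfl)⟩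

lemma pc_mem (hs₀ : s₀ ∈ S) (hsub : f₀ ⊆ s₀) (hcard : f₀.card = n)
    (hv : ∀ t ∈ S, v ∉ t) {t : Finset V} (hfT : ¬ f₀ ⊆ t) :
    (t.powersetCard n).filter (fun f => IsPiece (insert (insert v f₀) S) n f)
      = (t.powersetCard n).filter (fun f => IsPiece S n f) := by
  ext p
  simp only [Finset.mem_filter, Finset.mem_powersetCard]
  constructor
  · rintro ⟨⟨hpt, hpc⟩, hp⟩
    rcases (piece'_iff hs₀ hsub hcard hv).mp hp with rfl | hp
    · exact absurd hpt hfT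
    · exact ⟨⟨hpt, hpc⟩, hp⟩
  · rintro ⟨h1, hp⟩
    exact ⟨h1, (piece'_iff hs₀ hsub hcard hv).mpr (Or.inr hp)⟩

lemma pc_s (hs₀ : s₀ ∈ S) (hsub : f₀ ⊆ s₀) (hcard : f₀.card = n)
    (hv : ∀ t ∈ S, v ∉ t) {t : Finset V} (hft : f₀ ⊆ t) :
    (t.powersetCard n).filter (fun f => IsPiece (insert (insert v f₀) S) n f)
      = insert f₀ ((t.powersetCard n).filter (fun f => IsPiece S n f)) := by
  ext p
  simp only [Finset.mem_filter, Finset.mem_powersetCard, Finset.mem_insert]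
  constructor
  · rintro ⟨⟨hpt, hpc⟩, hp⟩
    rcases (piece'_iff hs₀ hsub hcard hv).mp hp with rfl | hp
    · exact Or.inl rfl
    · exact Or.inr ⟨⟨hpt, hpc⟩, hp⟩
  · rintro (rfl | ⟨h1, hp⟩)
    · exact ⟨⟨hft, hcard⟩, (piece'_iff hs₀ hsub hcard hv).mpr (Or.inl rfl)⟩
    · exact ⟨h1, (piece'_iff hs₀ hsub hcard hv).mpr (Or.inr hp)⟩

end Glue

set_option maxHeartbeats 1000000 in
/-- The main induction: the ambient graph is acyclic, connected on legit vertices, and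
(if the complex has at least two simplices) every simplex contains a piece. -/
theorem gammaHat_main {V : Type} [DecidableEq V] {n : ℕ} {S : Finset (Finset V)}
    (hS : IsTn n S) :
    (GammaHat n S).IsAcyclic ∧
      (∀ a b, Legit n S a → Legit n S b → (GammaHat n S).Reachable a b) ∧
      (∀ s ∈ S, 2 ≤ S.card → ∃ f, IsPiece S n f ∧ f ⊆ s) := by
  induction hS with
  | single s h =>
    have hnp : ∀ p : Finset V, ¬ IsPiece {s} n p := by
      rintro p ⟨-, h2⟩
      have hle := Finset.card_le_card (Finset.filter_subset (fun t => p ⊆ t) {s})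
      rw [Finset.card_singleton] at hle
      omega
    have hnl : ∀ a, ¬ Legit n {s} a := by
      rintro (p | t) h
      · exact hnp p h
      · rcases h with ⟨-, h2⟩
        have hle := Finset.card_le_card
          (Finset.filter_subset (fun f => IsPiece {s} n f) (t.powersetCard n))
        have h0 : ((t.powersetCard n).filter (fun f => IsPiece {s} n f)) = ∅ := by
          apply Finset.eq_empty_of_forall_notMem
          intro p hp
          exact hnp p (Finset.mem_filter.mp hp).2
        rw [h0] at h2
        simp at h2
    refine ⟨isAcyclic_of_no_adj ?_, fun a b ha hb => absurd ha (hnl a), ?_⟩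
    · intro a b h
      exact hnl a (gammaHat_adj_legit h).1
    · intro t ht h2
      rw [Finset.card_singleton] at h2
      omega
  | glue S s₀ f₀ v hS' hs₀ hsub hcard hv ih =>
    obtain ⟨ihA, ihR, ihP⟩ := ih
    have hTS : insert v f₀ ∉ S := glue_not_memT hv
    have hpiece'F0 : IsPiece (insert (insert v f₀) S) n f₀ :=
      (piece'_iff hs₀ hsub hcard hv).mpr (Or.inl rfl)
    -- part (3), uniformly
    have h3 : ∀ s ∈ insert (insert v f₀) S, 2 ≤ (insert (insert v f₀) S).card →
        ∃ f, IsPiece (insert (insert v f₀) S) n f ∧ f ⊆ s := by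
      intro s hs _
      rcases Finset.mem_insert.mp hs with rfl | hsS
      · exact ⟨f₀, hpiece'F0, Finset.subset_insert _ _⟩
      · by_cases h2 : 2 ≤ S.card
        · obtain ⟨f, hf, hfs⟩ := ihP s hsS h2
          exact ⟨f, (piece'_iff hs₀ hsub hcard hv).mpr (Or.inr hf), hfs⟩
        · have hpos : 0 < S.card := Finset.card_pos.mpr ⟨s₀, hs₀⟩
          have h1 : S.card = 1 := by omega
          obtain ⟨a, ha⟩ := Finset.card_eq_one.mp h1
          rw [ha, Finset.mem_singleton] at hsS hs₀
          exact ⟨f₀, hpiece'F0, by rw [hsS, ← hs₀]; exact hsub⟩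
    -- the new simplex is never an f-vertex
    have hFT : ¬ FCond n (insert (insert v f₀) S) (insert v f₀) := by
      rintro ⟨-, h2⟩
      rw [pc_T hs₀ hsub hcard hv, Finset.card_singleton] at h2
      omega
    -- S-pieces are S'-pieces; monotonicity of piece counts
    have hpcmono : ∀ t : Finset V,
        (t.powersetCard n).filter (fun f => IsPiece S n f) ⊆
          (t.powersetCard n).filter (fun f => IsPiece (insert (insert v f₀) S) n f) := by
      intro t p hp
      rw [Finset.mem_filter] at hp ⊢
      exact ⟨hp.1, (piece'_iff hs₀ hsub hcard hv).mpr (Or.inr hp.2)⟩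
    have hFmono : ∀ t, FCond n S t → FCond n (insert (insert v f₀) S) t := by
      rintro t ⟨h1, h2⟩
      exact ⟨Finset.mem_insert_of_mem h1, le_trans h2 (Finset.card_le_card (hpcmono t))⟩
    by_cases hpf : IsPiece S n f₀
    · -- CASE A : the glued face was already a piece; the graph is unchanged
      have hpeq : ∀ p : Finset V, IsPiece (insert (insert v f₀) S) n p ↔ IsPiece S n p := by
        intro p
        rw [piece'_iff hs₀ hsub hcard hv]
        constructor
        · rintro (rfl | h)
          · exact hpf
          · exact h
        · exact Or.inr
      have hpc : ∀ t : Finset V,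
          (t.powersetCard n).filter (fun f => IsPiece (insert (insert v f₀) S) n f)
            = (t.powersetCard n).filter (fun f => IsPiece S n f) := by
        intro t
        ext p
        simp only [Finset.mem_filter]
        rw [hpeq]
      have hfeq : ∀ t : Finset V, FCond n (insert (insert v f₀) S) t ↔ FCond n S t := by
        intro t
        constructor
        · rintro ⟨htS', h2⟩
          rcases Finset.mem_insert.mp htS' with rfl | htS
          · exfalso
            rw [pc_T hs₀ hsub hcard hv, Finset.card_singleton] at h2
            omega
          · rw [hpc] at h2
            exact ⟨htS, h2⟩
        · exact hFmono t
      have hgeq : GammaHat n (insert (insert v f₀) S) = GammaHat n S := by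
        ext a b
        rcases a with p | t <;> rcases b with p' | t'
        · exact Iff.rfl
        · rw [gammaHat_adj_inl_inr, gammaHat_adj_inl_inr, hpeq, hfeq]
        · rw [gammaHat_adj_inr_inl, gammaHat_adj_inr_inl, hpeq, hfeq]
        · exact Iff.rfl
      have hleg : ∀ a, Legit n (insert (insert v f₀) S) a ↔ Legit n S a := by
        rintro (p | t)
        · exact hpeq p
        · exact hfeq t
      exact ⟨by rw [hgeq]; exact ihA,
        fun a b ha hb => by rw [hgeq]; exact ihR a b ((hleg a).mp ha) ((hleg b).mp hb), h3⟩
    · -- CASE B : the glued face is a new piece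
      have huniq : ∀ t ∈ S, f₀ ⊆ t → t = s₀ := by
        intro t ht hft
        by_contra hne
        exact hpf ⟨hcard, Finset.one_lt_card.mpr
          ⟨t, Finset.mem_filter.mpr ⟨ht, hft⟩, s₀, Finset.mem_filter.mpr ⟨hs₀, hsub⟩, hne⟩⟩
      have hpcs₀ := pc_s hs₀ hsub hcard hv (t := s₀) hsub
      have hf0notpc : f₀ ∉ (s₀.powersetCard n).filter (fun f => IsPiece S n f) :=
        fun h => hpf (Finset.mem_filter.mp h).2
      have hcards₀ :
          ((s₀.powersetCard n).filter (fun f => IsPiece (insert (insert v f₀) S) n f)).card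
            = ((s₀.powersetCard n).filter (fun f => IsPiece S n f)).card + 1 := by
        rw [hpcs₀, Finset.card_insert_of_notMem hf0notpc]
      by_cases hcp : ((s₀.powersetCard n).filter (fun f => IsPiece S n f)).Nonempty
      · -- CASE B2 : s₀ contains an old piece; it becomes (or stays) an f-vertex
        have hFs₀ : FCond n (insert (insert v f₀) S) s₀ := by
          refine ⟨Finset.mem_insert_of_mem hs₀, ?_⟩
          have := Finset.card_pos.mpr hcp
          omega
        have hfeq' : ∀ t : Finset V,
            FCond n (insert (insert v f₀) S) t ↔ t = s₀ ∨ FCond n S t := by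
          intro t
          constructor
          · rintro ⟨htS', h2⟩
            rcases Finset.mem_insert.mp htS' with rfl | htS
            · exact absurd ⟨htS', h2⟩ hFT
            · by_cases hts : t = s₀
              · exact Or.inl hts
              · right
                refine ⟨htS, ?_⟩
                rwa [pc_mem hs₀ hsub hcard hv (fun h => hts (huniq t htS h))] at h2
          · rintro (rfl | hF)
            · exact hFs₀
            · exact hFmono t hF
        by_cases hs₀F : FCond n S s₀
        · -- CASE B2a : s₀ was already an f-vertex; we add a single leaf (the new piece f₀)
          have hxy : (Sum.inl f₀ : Finset V ⊕ Finset V) ≠ Sum.inr s₀ := by simp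
          have key : ∀ p t : Finset V,
              IsPiece (insert (insert v f₀) S) n p ∧ FCond n (insert (insert v f₀) S) t ∧ p ⊆ t
                ↔ (IsPiece S n p ∧ FCond n S t ∧ p ⊆ t) ∨ (p = f₀ ∧ t = s₀) := by
            intro p t
            constructor
            · rintro ⟨hp, ht, hpt⟩
              rcases (piece'_iff hs₀ hsub hcard hv).mp hp with rfl | hp
              · refine Or.inr ⟨rfl, ?_⟩
                rcases (hfeq' t).mp ht with rfl | hF
                · rfl
                · exact huniq t hF.1 hpt
              · refine Or.inl ⟨hp, ?_, hpt⟩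
                rcases (hfeq' t).mp ht with rfl | hF
                · exact hs₀F
                · exact hF
            · rintro (⟨hp, ht, hpt⟩ | ⟨rfl, rfl⟩)
              · exact ⟨(piece'_iff hs₀ hsub hcard hv).mpr (Or.inr hp), hFmono t ht, hpt⟩
              · exact ⟨hpiece'F0, hFs₀, hsub⟩
          have hgeq : GammaHat n (insert (insert v f₀) S)
              = addE (GammaHat n S) (Sum.inl f₀) (Sum.inr s₀) hxy := by
            ext a b
            rcases a with p | t <;> rcases b with p' | t'
            · rw [gammaHat_adj_inl_inl, addE_adj, gammaHat_adj_inl_inl]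
              simp
            · rw [gammaHat_adj_inl_inr, addE_adj, gammaHat_adj_inl_inr]
              have K := key p t'
              simp only [Sum.inl.injEq, Sum.inr.injEq]
              constructor
              · intro h
                rcases K.mp h with h | h
                · exact Or.inl h
                · exact Or.inr (Or.inl h)
              · rintro (h | h | ⟨h, -⟩)
                · exact K.mpr (Or.inl h)
                · exact K.mpr (Or.inr h)
                · exact absurd h (by simp)
            · rw [gammaHat_adj_inr_inl, addE_adj, gammaHat_adj_inr_inl]
              have K := key p' t
              simp only [Sum.inl.injEq, Sum.inr.injEq]
              constructor
              · intro h
                rcases K.mp h with h | h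
                · exact Or.inl h
                · exact Or.inr (Or.inr ⟨h.2, h.1⟩)
              · rintro (h | ⟨h, -⟩ | ⟨h1, h2⟩)
                · exact K.mpr (Or.inl h)
                · exact absurd h (by simp)
                · exact K.mpr (Or.inr ⟨h2, h1⟩)
            · rw [gammaHat_adj_inr_inr, addE_adj, gammaHat_adj_inr_inr]
              simp
          have hxG : ∀ z, ¬ (GammaHat n S).Adj (Sum.inl f₀) z :=
            fun z hz => hpf (gammaHat_adj_legit hz).1
          refine ⟨by rw [hgeq]; exact addE_isAcyclic hxy hxG ihA, ?_, h3⟩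
          have hreach : ∀ a, Legit n (insert (insert v f₀) S) a →
              (GammaHat n (insert (insert v f₀) S)).Reachable a (Sum.inr s₀) := by
            intro a ha
            have hlg : Legit n S a ∨ a = Sum.inl f₀ := by
              rcases a with p | t
              · rcases (piece'_iff hs₀ hsub hcard hv).mp ha with rfl | hp
                · exact Or.inr rfl
                · exact Or.inl hp
              · rcases (hfeq' t).mp ha with rfl | hF
                · exact Or.inl hs₀F
                · exact Or.inl hF
            rw [hgeq]
            rcases hlg with h | rfl
            · exact (ihR a (Sum.inr s₀) h hs₀F).mono (addE_le hxy)
            · exact (addE_adj_xy hxy).reachable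
          exact fun a b ha hb => (hreach a ha).trans (hreach b hb).symm
        · -- CASE B2b : s₀ contained exactly one piece p₁; we add a path p₁ - s₀ - f₀
          have hcp1 : ((s₀.powersetCard n).filter (fun f => IsPiece S n f)).card = 1 := by
            have hpos := Finset.card_pos.mpr hcp
            have hlt : ¬ 2 ≤ ((s₀.powersetCard n).filter (fun f => IsPiece S n f)).card :=
              fun h => hs₀F ⟨hs₀, h⟩
            omega
          obtain ⟨p₁, hp₁⟩ := Finset.card_eq_one.mp hcp1
          have hp₁mem : p₁ ∈ (s₀.powersetCard n).filter (fun f => IsPiece S n f) := by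
            rw [hp₁]; exact Finset.mem_singleton_self _
          have hp₁piece : IsPiece S n p₁ := (Finset.mem_filter.mp hp₁mem).2
          have hp₁sub : p₁ ⊆ s₀ :=
            (Finset.mem_powersetCard.mp (Finset.mem_filter.mp hp₁mem).1).1
          have hp₁f : p₁ ≠ f₀ := fun h => hpf (h ▸ hp₁piece)
          have huniqp : ∀ p : Finset V, IsPiece S n p → p ⊆ s₀ → p = p₁ := by
            intro p hp hps
            have hmem : p ∈ (s₀.powersetCard n).filter (fun f => IsPiece S n f) :=
              Finset.mem_filter.mpr ⟨Finset.mem_powersetCard.mpr ⟨hps, hp.1⟩, hp⟩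
            rw [hp₁] at hmem
            exact Finset.mem_singleton.mp hmem
          have hxy1 : (Sum.inr s₀ : Finset V ⊕ Finset V) ≠ Sum.inl p₁ := by simp
          have hxy2 : (Sum.inl f₀ : Finset V ⊕ Finset V) ≠ Sum.inr s₀ := by simp
          set G1 := addE (GammaHat n S) (Sum.inr s₀) (Sum.inl p₁) hxy1 with hG1
          set G2 := addE G1 (Sum.inl f₀) (Sum.inr s₀) hxy2 with hG2
          have key : ∀ p t : Finset V,
              IsPiece (insert (insert v f₀) S) n p ∧ FCond n (insert (insert v f₀) S) t ∧ p ⊆ t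
                ↔ (IsPiece S n p ∧ FCond n S t ∧ p ⊆ t) ∨ (p = p₁ ∧ t = s₀)
                    ∨ (p = f₀ ∧ t = s₀) := by
            intro p t
            constructor
            · rintro ⟨hp, ht, hpt⟩
              rcases (piece'_iff hs₀ hsub hcard hv).mp hp with rfl | hp
              · refine Or.inr (Or.inr ⟨rfl, ?_⟩)
                rcases (hfeq' t).mp ht with rfl | hF
                · rfl
                · exact huniq t hF.1 hpt
              · rcases (hfeq' t).mp ht with rfl | hF
                · exact Or.inr (Or.inl ⟨huniqp p hp hpt, rfl⟩)
                · exact Or.inl ⟨hp, hF, hpt⟩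
            · rintro (⟨hp, ht, hpt⟩ | ⟨rfl, rfl⟩ | ⟨rfl, rfl⟩)
              · exact ⟨(piece'_iff hs₀ hsub hcard hv).mpr (Or.inr hp), hFmono t ht, hpt⟩
              · exact ⟨(piece'_iff hs₀ hsub hcard hv).mpr (Or.inr hp₁piece), hFs₀, hp₁sub⟩
              · exact ⟨hpiece'F0, hFs₀, hsub⟩
          have hgeq : GammaHat n (insert (insert v f₀) S) = G2 := by
            ext a b
            rcases a with p | t <;> rcases b with p' | t'
            · rw [gammaHat_adj_inl_inl]
              rw [hG2, hG1]
              simp [addE_adj, gammaHat_adj_inl_inl]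
            · rw [gammaHat_adj_inl_inr, hG2, hG1]
              simp only [addE_adj, gammaHat_adj_inl_inr, Sum.inl.injEq, Sum.inr.injEq,
                reduceCtorEq, false_and, and_false, or_false, false_or]
              rw [key p t']
              exact or_assoc.symm
            · rw [gammaHat_adj_inr_inl, hG2, hG1]
              simp only [addE_adj, gammaHat_adj_inr_inl, Sum.inl.injEq, Sum.inr.injEq,
                reduceCtorEq, false_and, and_false, or_false, false_or]
              rw [key p' t]
              constructor
              · rintro (h | ⟨h1, h2⟩ | ⟨h1, h2⟩)
                · exact Or.inl (Or.inl h)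
                · exact Or.inl (Or.inr ⟨h2, h1⟩)
                · exact Or.inr ⟨h2, h1⟩
              · rintro ((h | ⟨h1, h2⟩) | ⟨h1, h2⟩)
                · exact Or.inl h
                · exact Or.inr (Or.inl ⟨h2, h1⟩)
                · exact Or.inr (Or.inr ⟨h2, h1⟩)
            · rw [gammaHat_adj_inr_inr, hG2, hG1]
              simp [addE_adj, gammaHat_adj_inr_inr]
          have hx1 : ∀ z, ¬ (GammaHat n S).Adj (Sum.inr s₀) z :=
            fun z hz => hs₀F (gammaHat_adj_legit hz).1
          have hx2 : ∀ z, ¬ G1.Adj (Sum.inl f₀) z := by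
            rintro z (h | ⟨h1, -⟩ | ⟨h1, -⟩)
            · exact hpf (gammaHat_adj_legit h).1
            · simp at h1
            · rw [Sum.inl.injEq] at h1
              exact hp₁f h1.symm
          refine ⟨by rw [hgeq]; exact addE_isAcyclic hxy2 hx2 (addE_isAcyclic hxy1 hx1 ihA),
            ?_, h3⟩
          have hle : GammaHat n S ≤ G2 := le_trans (addE_le hxy1) (addE_le hxy2)
          have hstep1 : G2.Adj (Sum.inr s₀) (Sum.inl p₁) := addE_le hxy2 (addE_adj_xy hxy1)
          have hstep2 : G2.Adj (Sum.inl f₀) (Sum.inr s₀) := addE_adj_xy hxy2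
          have hreach : ∀ a, Legit n (insert (insert v f₀) S) a →
              G2.Reachable a (Sum.inl p₁) := by
            intro a ha
            have hlg : Legit n S a ∨ a = Sum.inl f₀ ∨ a = Sum.inr s₀ := by
              rcases a with p | t
              · rcases (piece'_iff hs₀ hsub hcard hv).mp ha with rfl | hp
                · exact Or.inr (Or.inl rfl)
                · exact Or.inl hp
              · rcases (hfeq' t).mp ha with rfl | hF
                · exact Or.inr (Or.inr rfl)
                · exact Or.inl hF
            rcases hlg with h | rfl | rfl
            · exact (ihR a (Sum.inl p₁) h hp₁piece).mono hle
            · exact hstep2.reachable.trans hstep1.reachable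
            · exact hstep1.reachable
          intro a b ha hb
          rw [hgeq]
          exact (hreach a ha).trans (hreach b hb).symm
      · -- CASE B1 : s₀ contained no piece, so `S` was a single simplex
        have hempty : (s₀.powersetCard n).filter (fun f => IsPiece S n f) = ∅ :=
          Finset.not_nonempty_iff_eq_empty.mp hcp
        have hS1 : ∀ t ∈ S, t = s₀ := by
          intro t ht
          by_contra hne
          have h2 : 2 ≤ S.card := Finset.one_lt_card.mpr ⟨t, ht, s₀, hs₀, hne⟩
          obtain ⟨f, hf, hfs⟩ := ihP s₀ hs₀ h2
          have hmem : f ∈ (s₀.powersetCard n).filter (fun f => IsPiece S n f) :=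
            Finset.mem_filter.mpr ⟨Finset.mem_powersetCard.mpr ⟨hfs, hf.1⟩, hf⟩
          rw [hempty] at hmem
          exact absurd hmem (Finset.notMem_empty f)
        have hnopiece : ∀ p : Finset V, ¬ IsPiece S n p := by
          rintro p ⟨-, h2⟩
          have hss : S.filter (fun s => p ⊆ s) ⊆ {s₀} := by
            intro t ht
            rw [Finset.mem_singleton]
            exact hS1 t (Finset.mem_filter.mp ht).1
          have hle := Finset.card_le_card hss
          rw [Finset.card_singleton] at hle
          omega
        have hFs₀' : ¬ FCond n (insert (insert v f₀) S) s₀ := by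
          rintro ⟨-, h2⟩
          rw [hcards₀, hempty, Finset.card_empty] at h2
          omega
        have hnoleg : ∀ t, ¬ FCond n (insert (insert v f₀) S) t := by
          intro t ht
          rcases Finset.mem_insert.mp ht.1 with rfl | htS
          · exact hFT ht
          · exact hFs₀' (hS1 t htS ▸ ht)
        have hnoadj : ∀ a b, ¬ (GammaHat n (insert (insert v f₀) S)).Adj a b := by
          intro a b h
          rcases a with p | t <;> rcases b with p' | t'
          · exact h
          · exact hnoleg t' h.2.1
          · exact hnoleg t h.2.1
          · exact h
        refine ⟨isAcyclic_of_no_adj hnoadj, ?_, h3⟩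
        intro a b ha hb
        have hid : ∀ c, Legit n (insert (insert v f₀) S) c → c = Sum.inl f₀ := by
          rintro (p | t) h
          · rcases (piece'_iff hs₀ hsub hcard hv).mp h with rfl | hp
            · rfl
            · exact absurd hp (hnopiece p)
          · exact absurd h (hnoleg t)
        rw [hid a ha, hid b hb]

/-! ### Transfer to the subtype graph `Gamma` -/

section Transfer
variable {V : Type} [DecidableEq V] {n : ℕ} {S : Finset (Finset V)}

/-- The inclusion of vertices of `Γ(K)` into the ambient vertex type. -/
def iota (S : Finset (Finset V)) (n : ℕ) : PVert S n ⊕ FVert S n → Finset V ⊕ Finset V :=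
  Sum.map Subtype.val Subtype.val

lemma iota_injective : Function.Injective (iota S n) :=
  Sum.map_injective.mpr ⟨Subtype.val_injective, Subtype.val_injective⟩

lemma legit_iota (a : PVert S n ⊕ FVert S n) : Legit n S (iota S n a) := by
  rcases a with ⟨p, hp⟩ | ⟨t, ht⟩
  · exact hp
  · exact ht

lemma legit_lift {x : Finset V ⊕ Finset V} (h : Legit n S x) :
    ∃ a : PVert S n ⊕ FVert S n, iota S n a = x := by
  rcases x with p | t
  · exact ⟨Sum.inl ⟨p, h⟩, rfl⟩
  · exact ⟨Sum.inr ⟨t, h⟩, rfl⟩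

lemma adj_fwd {a b : PVert S n ⊕ FVert S n} (h : (Gamma S n).Adj a b) :
    (GammaHat n S).Adj (iota S n a) (iota S n b) := by
  rcases a with ⟨p, hp⟩ | ⟨t, ht⟩ <;> rcases b with ⟨p', hp'⟩ | ⟨t', ht'⟩
  · exact h.elim
  · exact ⟨hp, ht', h⟩
  · exact ⟨hp', ht, h⟩
  · exact h.elim

lemma adj_back {a b : PVert S n ⊕ FVert S n}
    (h : (GammaHat n S).Adj (iota S n a) (iota S n b)) : (Gamma S n).Adj a b := by
  rcases a with ⟨p, hp⟩ | ⟨t, ht⟩ <;> rcases b with ⟨p', hp'⟩ | ⟨t', ht'⟩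
  · exact h.elim
  · exact h.2.2
  · exact h.2.2
  · exact h.elim

/-- The inclusion as a graph homomorphism. -/
def iotaHom (S : Finset (Finset V)) (n : ℕ) : Gamma S n →g GammaHat n S where
  toFun := iota S n
  map_rel' := adj_fwd

lemma walk_back : ∀ {x y : Finset V ⊕ Finset V} (_ : (GammaHat n S).Walk x y)
    {a b : PVert S n ⊕ FVert S n}, x = iota S n a → y = iota S n b →
    (Gamma S n).Reachable a b := by
  intro x y w
  induction w with
  | nil =>
    intro a b hx hy
    have hab : a = b := iota_injective (hx.symm.trans hy)
    rw [hab]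
  | @cons x c y h w ih =>
    intro a b hx hy
    have hleg := (gammaHat_adj_legit h).2
    obtain ⟨a', ha'⟩ := legit_lift hleg
    have h' : (GammaHat n S).Adj (iota S n a) (iota S n a') := by
      rw [← hx, ha']; exact h
    exact ((adj_back h').reachable).trans (ih ha'.symm hy)

end Transfer

/-- for every `K ∈ 𝒯ₙ`, the graph `Γ(K)` is a tree (acyclic and any two
vertices are connected by a path). -/
theorem gamma_isTree {V : Type} [DecidableEq V] {n : ℕ}
    {S : Finset (Finset V)} (hS : IsTn n S) :
    (Gamma S n).IsAcyclic ∧ ∀ a b : PVert S n ⊕ FVert S n, (Gamma S n).Reachable a b := by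
  obtain ⟨hA, hR, -⟩ := gammaHat_main hS
  constructor
  · intro u c hc
    exact hA (c.map (iotaHom S n))
      ((SimpleGraph.Walk.map_isCycle_iff_of_injective
        (f := iotaHom S n) iota_injective).mpr hc)
  · intro a b
    obtain ⟨w⟩ := hR (iota S n a) (iota S n b) (legit_iota a) (legit_iota b)
    exact walk_back w rfl rfl
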